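/- For every t ∈ ℝ, the maximum of the function g_t(x,y,z) = tr(J_{μ_t}(x·e₇ + y·e₈ + z·e₉)⁴) over the unit sphere {(x,y,z) ∈ ℝ³ : x² + y² + z² = 1} equals 2(1+t⁴), and it is attained at (x,y,z) = (1,0,0). -/
import Mathlib


open Matrix Finset Real Filter

noncomputable section

/-- The canonical basis vector `eᵢ` of `ℝ⁹` (0-indexed: `e 0 = e₁`, …, `e 8 = e₉`). -/
def e (i : Fin 9) : Fin 9 → ℝ := Pi.single i 1

/-- Half of the structure constants of `μ_t` (before antisymmetrization):
`μ_t(e₅,e₄)=e₇, μ_t(e₁,e₆)=e₈, μ_t(e₃,e₂)=e₉, μ_t(e₃,e₆)=t e₇, μ_t(e₅,e₂)=t e₈, μ_t(e₁,e₄)=t e₉`. -/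
def muHalf (t : ℝ) (i j k : Fin 9) : ℝ :=
  (if i = 4 ∧ j = 3 ∧ k = 6 then (1:ℝ) else 0) +
  (if i = 0 ∧ j = 5 ∧ k = 7 then (1:ℝ) else 0) +
  (if i = 2 ∧ j = 1 ∧ k = 8 then (1:ℝ) else 0) +
  (if i = 2 ∧ j = 5 ∧ k = 6 then t else 0) +
  (if i = 4 ∧ j = 1 ∧ k = 7 then t else 0) +
  (if i = 0 ∧ j = 3 ∧ k = 8 then t else 0)

/-- The (antisymmetric) structure constants of `μ_t`. -/
def muC (t : ℝ) (i j k : Fin 9) : ℝ := muHalf t i j k - muHalf t j i k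

/-- The two-step nilpotent Lie bracket `μ_t` on `ℝ⁹`. -/
def mu (t : ℝ) (X Y : Fin 9 → ℝ) : Fin 9 → ℝ :=
  fun k => ∑ i, ∑ j, X i * Y j * muC t i j k

/-- Structure constants of `μ̃_t`: those of `μ_t` plus `μ̃_t(e₁,e₂)=e₇`. -/
def muTildeHalf (t : ℝ) (i j k : Fin 9) : ℝ :=
  muHalf t i j k + (if i = 0 ∧ j = 1 ∧ k = 6 then (1:ℝ) else 0)

def muTildeC (t : ℝ) (i j k : Fin 9) : ℝ := muTildeHalf t i j k - muTildeHalf t j i k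

/-- The two-step nilpotent Lie bracket `μ̃_t` on `ℝ⁹`. -/
def muTilde (t : ℝ) (X Y : Fin 9 → ℝ) : Fin 9 → ℝ :=
  fun k => ∑ i, ∑ j, X i * Y j * muTildeC t i j k

/-- Structure constants of `μ̄_t`: those of `μ̃_t` plus `μ̄_t(e₃,e₄)=e₈`. -/
def muBarHalf (t : ℝ) (i j k : Fin 9) : ℝ :=
  muTildeHalf t i j k + (if i = 2 ∧ j = 3 ∧ k = 7 then (1:ℝ) else 0)

def muBarC (t : ℝ) (i j k : Fin 9) : ℝ := muBarHalf t i j k - muBarHalf t j i k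

/-- The two-step nilpotent Lie bracket `μ̄_t` on `ℝ⁹`. -/
def muBar (t : ℝ) (X Y : Fin 9 → ℝ) : Fin 9 → ℝ :=
  fun k => ∑ i, ∑ j, X i * Y j * muBarC t i j k

/-- The space of (skew-symmetric bilinear) bracket candidates on `ℝ⁹`,
represented as bare functions. -/
abbrev NilBracket := (Fin 9 → ℝ) → (Fin 9 → ℝ) → Fin 9 → ℝ

/-- The Ricci operator of `(ℝ⁹, ν)` w.r.t. the canonical inner product, as a matrix in the
canonical basis:
`⟨Ric_ν X, Y⟩ = -(1/2)∑ᵢⱼ⟨ν(X,eᵢ),eⱼ⟩⟨ν(Y,eᵢ),eⱼ⟩ + (1/4)∑ᵢⱼ⟨ν(eᵢ,eⱼ),X⟩⟨ν(eᵢ,eⱼ),Y⟩`. -/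
def ric (ν : NilBracket) : Matrix (Fin 9) (Fin 9) ℝ :=
  fun a b =>
    -(1/2) * (∑ i, ∑ j, ν (e a) (e i) j * ν (e b) (e i) j)
    + (1/4) * (∑ i, ∑ j, ν (e i) (e j) a * ν (e i) (e j) b)

/-- `D` is a derivation of the algebra `(ℝ⁹, ν)`. -/
def IsDerivation (ν : NilBracket) (D : Matrix (Fin 9) (Fin 9) ℝ) : Prop :=
  ∀ X Y : Fin 9 → ℝ, D.mulVec (ν X Y) = ν (D.mulVec X) Y + ν X (D.mulVec Y)

/-- The basis `e₁,…,e₆` of `v = span(e₁,…,e₆) ⊆ ℝ⁹`, indexed by `Fin 6`. -/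
def E (a : Fin 6) : Fin 9 → ℝ := e (Fin.castLE (by norm_num) a)

/-- The skew-symmetric 6×6 matrix `J_ν(w)`, `w = x e₇ + y e₈ + z e₉`, defined by
`⟨J_ν(w) v₁, v₂⟩ = ⟨ν(v₁,v₂), w⟩` for `v₁,v₂ ∈ span(e₁,…,e₆)`. -/
def Jmat (ν : NilBracket) (x y z : ℝ) : Matrix (Fin 6) (Fin 6) ℝ :=
  fun a b => ν (E b) (E a) 6 * x + ν (E b) (E a) 7 * y + ν (E b) (E a) 8 * z

/-- The `GL₉(ℝ)` action on brackets: `(g·ν)(X,Y) = g ν(g⁻¹X, g⁻¹Y)`. -/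
def act (g : Matrix (Fin 9) (Fin 9) ℝ) (ν : NilBracket) : NilBracket :=
  fun X Y => g.mulVec (ν (g⁻¹.mulVec X) (g⁻¹.mulVec Y))

/-- The algebras `(ℝ⁹, ν)` and `(ℝ⁹, ν')` are isomorphic:
there is `g ∈ GL₉(ℝ)` with `g ν(X,Y) = ν'(gX, gY)` for all `X, Y`. -/
def LieIso (ν ν' : NilBracket) : Prop :=
  ∃ g : Matrix (Fin 9) (Fin 9) ℝ, IsUnit g ∧
    ∀ X Y : Fin 9 → ℝ, g.mulVec (ν X Y) = ν' (g.mulVec X) (g.mulVec Y)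

lemma mu_e (t : ℝ) (p q k : Fin 9) : mu t (e p) (e q) k = muC t p q k := by
  simp [mu, e, Pi.single_apply, ite_mul, mul_ite, Finset.sum_ite_eq]

set_option maxHeartbeats 2000000 in
lemma Jmat_mu_eq (t x y z : ℝ) :
    Jmat (mu t) x y z =
      !![0,0,0,-(t*z),0,-y;
         0,0,z,0,t*y,0;
         0,-z,0,0,0,-(t*x);
         t*z,0,0,0,x,0;
         0,-(t*y),0,-x,0,0;
         y,0,t*x,0,0,0] := by
  ext a b
  fin_cases a <;> fin_cases b <;>
    simp +decide [Jmat, E, mu_e, muC, muHalf, Fin.castLE, Fin.ext_iff,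
      Matrix.cons_val_succ, Matrix.cons_val_zero] <;> (try rfl) <;> ring_nf

set_option maxHeartbeats 1000000 in
lemma trace_J4 (t x y z : ℝ) :
    Matrix.trace ((Jmat (mu t) x y z)^4) =
      2*(1+t^4)*(x^4+y^4+z^4) + 8*t^2*(x^2*y^2+x^2*z^2+y^2*z^2) := by
  rw [Jmat_mu_eq]
  have h4 : ∀ (A : Matrix (Fin 6) (Fin 6) ℝ), A^4 = A*A*A*A := by
    intro A; rw [pow_succ, pow_succ, pow_succ, pow_one]
  rw [h4]
  simp [Matrix.trace, Matrix.mul_apply, Fin.sum_univ_succ, Matrix.diag]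
  ring

/-- the maximum of `g_t(x,y,z) = tr(J_{μ_t}(x e₇+y e₈+z e₉)⁴)` over the unit
sphere `x²+y²+z²=1` equals `2(1+t⁴)`, attained at `(1,0,0)`. -/
theorem statement5 (t : ℝ) :
    (∀ x y z : ℝ, x^2 + y^2 + z^2 = 1 →
      Matrix.trace ((Jmat (mu t) x y z)^4) ≤ 2*(1+t^4)) ∧
    (1:ℝ)^2 + 0^2 + 0^2 = 1 ∧
    Matrix.trace ((Jmat (mu t) 1 0 0)^4) = 2*(1+t^4) := by
  refine ⟨?_, by norm_num, by rw [trace_J4]; ring⟩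
  intro x y z h
  rw [trace_J4]
  have key : 2*(1+t^4) - (2*(1+t^4)*(x^4+y^4+z^4) + 8*t^2*(x^2*y^2+x^2*z^2+y^2*z^2))
      = 4*(x^2*y^2+x^2*z^2+y^2*z^2)*(1-t^2)^2 := by
    linear_combination (-(2*(1+t^4))*(1+x^2+y^2+z^2)) * h
  nlinarith [sq_nonneg (1-t^2), sq_nonneg (x*y), sq_nonneg (x*z), sq_nonneg (y*z), key,
    mul_nonneg (mul_nonneg (add_nonneg (add_nonneg (mul_nonneg (sq_nonneg x) (sq_nonneg y))
      (mul_nonneg (sq_nonneg x) (sq_nonneg z))) (mul_nonneg (sq_nonneg y) (sq_nonneg z)))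
      (by norm_num : (0:ℝ) ≤ 4)) (sq_nonneg (1-t^2))]
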